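/- The function g₁(t) = 4√((2/3)(54/(5t) - 1)) - 2/t - 69/5 is strictly decreasing on the interval (0.14, 1), and g₁(t) < 0 for all t ∈ (0.1978, 3/10]. -/

import Mathlib

noncomputable def g1 (t : ℝ) : ℝ :=
  4 * Real.sqrt ((2 / 3) * (54 / (5 * t) - 1)) - 2 / t - 69 / 5

lemma aux_key (a b sa sb : ℝ) (ha0 : 0 < a) (hb0 : 0 < b) (hab : a < b)
    (hsa0 : 0 < sa) (hsb0 : 0 < sb) (hsalt : sa < 36/5) (hsblt : sb < 36/5)
    (h1 : sa ^ 2 * a = 2/3 * (54/5 - a)) (h2 : sb ^ 2 * b = 2/3 * (54/5 - b)) :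
    4 * sb - 2 / b - 69 / 5 < 4 * sa - 2 / a - 69 / 5 := by
  have key : (sa - sb) * (sa + sb) * (a * b) = 36/5 * (b - a) := by
    linear_combination b * h1 - a * h2
  have hsd : 0 < sa - sb := by
    nlinarith [mul_pos (mul_pos (add_pos hsa0 hsb0) ha0) hb0]
  have hDP : 0 < (sa - sb) * (a * b) := mul_pos hsd (mul_pos ha0 hb0)
  have h7 : (sa - sb) * (a * b) * (sa + sb) < (sa - sb) * (a * b) * (72/5) :=
    mul_lt_mul_of_pos_left (by linarith) hDP
  have h5 : 2 * (b - a) < 4 * (sa - sb) * (a * b) := by nlinarith [key, h7]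
  have h6 : 2/a - 2/b < 4 * (sa - sb) := by
    rw [div_sub_div _ _ ha0.ne' hb0.ne', div_lt_iff₀ (mul_pos ha0 hb0)]
    nlinarith [h5]
  linarith

theorem stmt_16 :
    StrictAntiOn g1 (Set.Ioo 0.14 1) ∧
    ∀ t : ℝ, 0.1978 < t → t ≤ 3 / 10 → g1 t < 0 := by
  constructor
  · intro a ha b hb hab
    obtain ⟨ha1, ha2⟩ := ha
    obtain ⟨hb1, hb2⟩ := hb
    have ha1' : (0.14 : ℝ) < a := ha1
    have hb1' : (0.14 : ℝ) < b := hb1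
    norm_num at ha1' hb1'
    have ha0 : (0:ℝ) < a := by linarith
    have hb0 : (0:ℝ) < b := by linarith
    simp only [g1]
    have hAda : 1 < 54 / (5*a) := by rw [lt_div_iff₀ (by positivity)]; nlinarith
    have hAdb : 1 < 54 / (5*b) := by rw [lt_div_iff₀ (by positivity)]; nlinarith
    have hApos : 0 < (2/3 : ℝ) * (54 / (5*a) - 1) := by nlinarith
    have hBpos : 0 < (2/3 : ℝ) * (54 / (5*b) - 1) := by nlinarith
    have hda : 54 / (5*a) < 1969/25 := by
      rw [div_lt_iff₀ (by positivity)]; nlinarith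
    have hdb : 54 / (5*b) < 1969/25 := by
      rw [div_lt_iff₀ (by positivity)]; nlinarith
    have hsalt : Real.sqrt ((2/3 : ℝ) * (54 / (5*a) - 1)) < 36/5 := by
      rw [show (36/5 : ℝ) = Real.sqrt ((36/5)^2) by
        rw [Real.sqrt_sq (by norm_num)]]
      apply Real.sqrt_lt_sqrt hApos.le
      nlinarith
    have hsblt : Real.sqrt ((2/3 : ℝ) * (54 / (5*b) - 1)) < 36/5 := by
      rw [show (36/5 : ℝ) = Real.sqrt ((36/5)^2) by
        rw [Real.sqrt_sq (by norm_num)]]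
      apply Real.sqrt_lt_sqrt hBpos.le
      nlinarith
    have h1 : Real.sqrt ((2/3 : ℝ) * (54 / (5*a) - 1)) ^ 2 * a = 2/3 * (54/5 - a) := by
      rw [Real.sq_sqrt hApos.le]; field_simp
    have h2 : Real.sqrt ((2/3 : ℝ) * (54 / (5*b) - 1)) ^ 2 * b = 2/3 * (54/5 - b) := by
      rw [Real.sq_sqrt hBpos.le]; field_simp
    exact aux_key a b _ _ ha0 hb0 hab (Real.sqrt_pos.2 hApos) (Real.sqrt_pos.2 hBpos)
      hsalt hsblt h1 h2
  · intro t ht1 ht2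
    have ht1' : (0.1978 : ℝ) < t := ht1
    norm_num at ht1'
    have ht0 : (0:ℝ) < t := by linarith
    have hR : 0 < 15083*t^2 - 4500*t + 300 := by
      nlinarith [sq_nonneg (t - 4945/25000)]
    have keyq : (2/t + 69/5)^2 - 16 * ((2/3)*(54/(5*t)-1))
        = (15083*t^2 - 4500*t + 300) / (75 * t^2) := by
      field_simp; ring
    have h16 : 16 * ((2/3)*(54/(5*t)-1)) < (2/t + 69/5)^2 := by
      have := div_pos hR (show (0:ℝ) < 75*t^2 by positivity)
      linarith [keyq]
    have hs : Real.sqrt ((2/3)*(54/(5*t)-1)) < (2/t + 69/5)/4 := by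
      rw [Real.sqrt_lt' (by positivity)]
      rw [div_pow]
      norm_num
      linarith
    simp only [g1]
    nlinarith [hs]
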